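/- Let f : ℝⁿ → ℝ^d be any function, w ∈ ℝ^d, b ∈ ℝ, and let Σ be a positive semidefinite d×d matrix with wᵀΣw > 0. Let z be distributed as the centered multivariate Gaussian measure N(0, Σ) on ℝ^d. Fix x ∈ ℝⁿ, a label y ∈ {−1, 1}, an exponent p ∈ [1, ∞], a radius ε ≥ 0, and a constant Δ ≥ 0 such that |(wᵀf(x) + b) − (wᵀf(x + δ) + b)| ≤ Δ for every δ with ‖δ‖_p ≤ ε. Then for every δ with ‖δ‖_p ≤ ε, P_z( y·(wᵀ(f(x + δ) + z) + b) ≤ 0 ) − P_z( y·(wᵀ(f(x) + z) + b) ≤ 0 ) ≤ Δ / √(2π · wᵀΣw). -/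

import Mathlib

open MeasureTheory ProbabilityTheory Matrix
open scoped ENNReal

/-- The standard multivariate Gaussian `N(0, I_d)` on `ℝ^d`, as the product of `d`
standard real Gaussians. -/
noncomputable def stdGaussianPi (d : ℕ) : Measure (Fin d → ℝ) :=
  Measure.pi fun _ => gaussianReal 0 1

/-- The centered multivariate Gaussian `N(0, Σ)` on `ℝ^d` with positive semidefinite
covariance matrix `Σ`, as the pushforward of the standard Gaussian under `√Σ`. -/
noncomputable def multivariateGaussian {d : ℕ} {S : Matrix (Fin d) (Fin d) ℝ}
    (hS : S.PosSemidef) : Measure (Fin d → ℝ) :=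
  (stdGaussianPi d).map (fun u => ((hS.1.eigenvectorUnitary : Matrix (Fin d) (Fin d) ℝ) *
    diagonal ((RCLike.ofReal : ℝ → ℝ) ∘ Real.sqrt ∘ hS.1.eigenvalues) *
    (star hS.1.eigenvectorUnitary : Matrix (Fin d) (Fin d) ℝ)) *ᵥ u)

/-- The cumulative distribution function `Φ` of the standard real Gaussian:
`Φ t = (1/√(2π)) ∫_{-∞}^{t} exp (-s²/2) ds`. -/
noncomputable def stdGaussianCDF (t : ℝ) : ℝ :=
  (Real.sqrt (2 * Real.pi))⁻¹ * ∫ s in Set.Iic t, Real.exp (-s ^ 2 / 2)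


open scoped NNReal

namespace StatementZeroAux

open Real

/-- The convolution identity for Gaussian densities. -/
lemma gauss_conv_pdf (a b : ℝ≥0) (ha : a ≠ 0) (hb : b ≠ 0) (t : ℝ) :
    ∫ x : ℝ, gaussianPDFReal 0 a x * gaussianPDFReal 0 b (t - x) = gaussianPDFReal 0 (a + b) t := by
  have ha' : (0:ℝ) < a := lt_of_le_of_ne a.coe_nonneg (by exact_mod_cast (Ne.symm ha))
  have hb' : (0:ℝ) < b := lt_of_le_of_ne b.coe_nonneg (by exact_mod_cast (Ne.symm hb))
  have hab : (0:ℝ) < (a:ℝ) + b := by linarith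
  set k : ℝ := ((a:ℝ) + b) / (2 * a * b) with hk
  have hkpos : 0 < k := by positivity
  set c : ℝ := (a:ℝ) * t / ((a:ℝ) + b) with hc
  simp only [gaussianPDFReal, sub_zero]
  have key : ∀ x : ℝ, (-(x^2) / (2*(a:ℝ))) + (-((t - x)^2) / (2*(b:ℝ)))
      = -(k * (x - c)^2) + (-(t^2) / (2*((a:ℝ)+b))) := by
    intro x
    rw [hk, hc]
    field_simp
    ring
  have hshift : ∫ x : ℝ, rexp (-(k * (x - c)^2)) = √(π / k) := by
    have hg := integral_gaussian k
    simp_rw [neg_mul] at hg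
    rw [← hg]
    exact integral_sub_right_eq_self (fun x => rexp (-(k * x^2))) c
  have h1 : √((2 * π * (a:ℝ))⁻¹ * ((2 * π * (b:ℝ))⁻¹ * (π / k)))
      = (√(2 * π * a))⁻¹ * ((√(2 * π * b))⁻¹ * √(π / k)) := by
    rw [Real.sqrt_mul (by positivity), Real.sqrt_mul (by positivity), Real.sqrt_inv, Real.sqrt_inv]
  have h2 : (2 * π * (a:ℝ))⁻¹ * ((2 * π * (b:ℝ))⁻¹ * (π / k)) = (2 * π * ((a:ℝ)+b))⁻¹ := by
    rw [hk]; field_simp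
  calc ∫ x : ℝ, (√(2 * π * a))⁻¹ * rexp (-x ^ 2 / (2 * a)) *
        ((√(2 * π * b))⁻¹ * rexp (-(t - x) ^ 2 / (2 * b)))
      = (√(2 * π * a))⁻¹ * ((√(2 * π * b))⁻¹ *
        ∫ x : ℝ, rexp (-(k * (x - c)^2)) * rexp (-(t^2) / (2*((a:ℝ)+b)))) := by
        rw [← integral_const_mul, ← integral_const_mul]
        congr 1 with x
        rw [← Real.exp_add, ← key x, Real.exp_add]
        ring
    _ = (√(2 * π * a))⁻¹ * ((√(2 * π * b))⁻¹ * (√(π / k) * rexp (-(t^2) / (2*((a:ℝ)+b))))) := by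
        rw [integral_mul_const, hshift]
    _ = (√(2 * π * ((a:ℝ)+b)))⁻¹ * rexp (-(t^2) / (2*((a:ℝ)+b))) := by
        rw [show (√(2 * π * (a:ℝ)))⁻¹ * ((√(2 * π * (b:ℝ)))⁻¹ * (√(π / k) * rexp (-(t^2) / (2*((a:ℝ)+b)))))
            = (√(2 * π * (a:ℝ)))⁻¹ * ((√(2 * π * (b:ℝ)))⁻¹ * √(π / k)) * rexp (-(t^2) / (2*((a:ℝ)+b))) by ring,
          ← h1, h2, Real.sqrt_inv]
    _ = (√(2 * π * ((a + b : ℝ≥0) : ℝ)))⁻¹ * rexp (-t ^ 2 / (2 * ((a+b : ℝ≥0) : ℝ))) := by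
        push_cast; ring_nf

lemma gaussianPDFReal_le' (v : ℝ≥0) (x : ℝ) : gaussianPDFReal 0 v x ≤ (√(2 * π * v))⁻¹ := by
  unfold gaussianPDFReal
  simp only [sub_zero]
  refine mul_le_of_le_one_right (by positivity) (Real.exp_le_one_iff.2 ?_)
  rcases eq_or_ne (v:ℝ) 0 with h | h
  · simp [h]
  · have : (0:ℝ) < v := lt_of_le_of_ne v.coe_nonneg (Ne.symm h)
    exact div_nonpos_of_nonpos_of_nonneg (neg_nonpos.2 (sq_nonneg _)) (by positivity)

lemma gauss_conv_pdf' (a b : ℝ≥0) (ha : a ≠ 0) (hb : b ≠ 0) (u : ℝ) :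
    ∫⁻ x : ℝ, gaussianPDF 0 a x * gaussianPDF 0 b (u - x) = gaussianPDF 0 (a + b) u := by
  have hint : Integrable (fun x => gaussianPDFReal 0 b (u - x) * gaussianPDFReal 0 a x) := by
    refine (integrable_gaussianPDFReal 0 a).bdd_mul (c := (√(2 * π * b))⁻¹)
      ((measurable_gaussianPDFReal 0 b).comp (measurable_const.sub measurable_id)).aestronglyMeasurable
      (Filter.Eventually.of_forall fun x => ?_)
    rw [Real.norm_eq_abs, abs_of_nonneg (gaussianPDFReal_nonneg _ _ _)]
    exact gaussianPDFReal_le' b _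
  have hint' : Integrable (fun x => gaussianPDFReal 0 a x * gaussianPDFReal 0 b (u - x)) := by
    simpa [mul_comm] using hint
  calc ∫⁻ x : ℝ, gaussianPDF 0 a x * gaussianPDF 0 b (u - x)
      = ∫⁻ x : ℝ, ENNReal.ofReal (gaussianPDFReal 0 a x * gaussianPDFReal 0 b (u - x)) := by
        congr 1 with x
        rw [gaussianPDF, gaussianPDF, ← ENNReal.ofReal_mul (gaussianPDFReal_nonneg _ _ _)]
    _ = ENNReal.ofReal (∫ x : ℝ, gaussianPDFReal 0 a x * gaussianPDFReal 0 b (u - x)) := by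
        rw [ofReal_integral_eq_lintegral_ofReal hint'
          (Filter.Eventually.of_forall fun x =>
            mul_nonneg (gaussianPDFReal_nonneg _ _ _) (gaussianPDFReal_nonneg _ _ _))]
    _ = ENNReal.ofReal (gaussianPDFReal 0 (a + b) u) := by rw [gauss_conv_pdf a b ha hb u]
    _ = gaussianPDF 0 (a + b) u := rfl

/-- The sum of two independent centered Gaussians is a centered Gaussian. -/
lemma gauss_conv (a b : ℝ≥0) :
    Measure.map (fun p : ℝ × ℝ => p.1 + p.2) ((gaussianReal 0 a).prod (gaussianReal 0 b))
      = gaussianReal 0 (a + b) := by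
  by_cases ha : a = 0
  · subst ha
    rw [gaussianReal_zero_var]
    show (Measure.dirac 0).conv (gaussianReal 0 b) = _
    rw [Measure.dirac_zero_conv, zero_add]
  by_cases hb : b = 0
  · subst hb
    rw [gaussianReal_zero_var]
    show (gaussianReal 0 a).conv (Measure.dirac 0) = _
    rw [Measure.conv_dirac_zero, add_zero]
  have hab : a + b ≠ 0 := by simp [ha, hb]
  have hma : Measurable (gaussianPDF 0 a) := measurable_gaussianPDF 0 a
  have hmb : Measurable (gaussianPDF 0 b) := measurable_gaussianPDF 0 b
  ext s hs
  rw [Measure.map_apply measurable_add hs, gaussianReal_of_var_ne_zero 0 ha,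
    gaussianReal_of_var_ne_zero 0 hb, gaussianReal_of_var_ne_zero 0 hab]
  have hind : Measurable fun u : ℝ => s.indicator (fun _ => (1:ℝ≥0∞)) u :=
    measurable_const.indicator hs
  calc ((volume.withDensity (gaussianPDF 0 a)).prod
          (volume.withDensity (gaussianPDF 0 b))) ((fun p : ℝ × ℝ => p.1 + p.2) ⁻¹' s)
      = ∫⁻ x, (volume.withDensity (gaussianPDF 0 b)) {y | x + y ∈ s}
          ∂(volume.withDensity (gaussianPDF 0 a)) := by
        rw [Measure.prod_apply (measurable_add hs)]
        rfl
    _ = ∫⁻ x, (∫⁻ y, gaussianPDF 0 b y * s.indicator 1 (x + y))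
          ∂(volume.withDensity (gaussianPDF 0 a)) := by
        congr 1 with x
        have hsx : MeasurableSet {y : ℝ | x + y ∈ s} := (measurable_const.add measurable_id) hs
        rw [withDensity_apply _ hsx, ← lintegral_indicator hsx]
        congr 1 with y
        by_cases hxy : x + y ∈ s <;> simp [Set.indicator, hxy]
    _ = ∫⁻ x, gaussianPDF 0 a x * (∫⁻ y, gaussianPDF 0 b y * s.indicator 1 (x + y)) ∂volume := by
        rw [lintegral_withDensity_eq_lintegral_mul _ hma]
        · rfl
        · apply Measurable.lintegral_prod_right
          exact (hmb.comp measurable_snd).mul (hind.comp measurable_add)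
    _ = ∫⁻ x, gaussianPDF 0 a x * (∫⁻ u, gaussianPDF 0 b (u - x) * s.indicator 1 u) ∂volume := by
        congr 1 with x
        congr 1
        rw [← lintegral_add_right_eq_self (fun u => gaussianPDF 0 b (u - x) * s.indicator 1 u) x]
        congr 1 with y
        simp [add_comm x y]
    _ = ∫⁻ x, (∫⁻ u, gaussianPDF 0 a x * (gaussianPDF 0 b (u - x) * s.indicator 1 u)) ∂volume := by
        congr 1 with x
        have hm : Measurable fun u : ℝ => gaussianPDF 0 b (u - x) * s.indicator 1 u :=
          (hmb.comp (measurable_id.sub measurable_const)).mul hind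
        rw [lintegral_const_mul _ hm]
    _ = ∫⁻ x, (∫⁻ u, gaussianPDF 0 a x * gaussianPDF 0 b (u - x) * s.indicator 1 u) ∂volume := by
        congr 1 with x
        congr 1 with u
        rw [mul_assoc]
    _ = ∫⁻ u, (∫⁻ x, gaussianPDF 0 a x * gaussianPDF 0 b (u - x) * s.indicator 1 u) ∂volume := by
        refine lintegral_lintegral_swap (Measurable.aemeasurable ?_)
        exact ((hma.comp measurable_fst).mul
          (hmb.comp (measurable_snd.sub measurable_fst))).mul (hind.comp measurable_snd)
    _ = ∫⁻ u, gaussianPDF 0 (a + b) u * s.indicator 1 u ∂volume := by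
        congr 1 with u
        have hm : Measurable fun x : ℝ => gaussianPDF 0 a x * gaussianPDF 0 b (u - x) :=
          hma.mul (hmb.comp (measurable_const.sub measurable_id))
        rw [lintegral_mul_const _ hm, gauss_conv_pdf' a b ha hb u]
    _ = ∫⁻ u in s, gaussianPDF 0 (a + b) u ∂volume := by
        rw [← lintegral_indicator hs]
        congr 1 with u
        by_cases hu : u ∈ s <;> simp [Set.indicator, hu]
    _ = (volume.withDensity (gaussianPDF 0 (a + b))) s := (withDensity_apply _ hs).symm

lemma measurable_dot {d : ℕ} (v : Fin d → ℝ) : Measurable fun u : Fin d → ℝ => v ⬝ᵥ u :=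
  Finset.measurable_sum Finset.univ fun i _ => (measurable_pi_apply (X := fun _ : Fin d => ℝ) i).const_mul (v i)

instance (d : ℕ) : IsProbabilityMeasure (stdGaussianPi d) := by
  unfold stdGaussianPi; infer_instance

/-- The law of a linear functional of a standard Gaussian vector. -/
lemma dot_std_gaussian (d : ℕ) (v : Fin d → ℝ) :
    Measure.map (fun u : Fin d → ℝ => v ⬝ᵥ u) (stdGaussianPi d)
      = gaussianReal 0 ⟨∑ i, v i ^ 2, by positivity⟩ := by
  induction d with
  | zero =>
      have h0 : (fun u : Fin 0 → ℝ => v ⬝ᵥ u) = fun _ => (0:ℝ) := by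
        funext u; simp [dotProduct]
      rw [h0, Measure.map_const]
      have : (⟨∑ i : Fin 0, v i ^ 2, by positivity⟩ : ℝ≥0) = 0 := by
        ext; simp
      refine Eq.trans ?_ ((congrArg (gaussianReal 0) this).trans (gaussianReal_zero_var 0)).symm
      simp
  | succ d ih =>
      set e := MeasurableEquiv.piFinSuccAbove (fun _ : Fin (d+1) => ℝ) 0 with he
      have hmp := measurePreserving_piFinSuccAbove (fun _ : Fin (d+1) => gaussianReal 0 1) 0
      have hpi : stdGaussianPi (d+1) = Measure.map e.symm
          ((gaussianReal 0 1).prod (stdGaussianPi d)) := by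
        unfold stdGaussianPi
        rw [← hmp.map_eq, Measure.map_map e.symm.measurable e.measurable]
        simp [stdGaussianPi]
      have hcomp : (fun u : Fin (d+1) → ℝ => v ⬝ᵥ u) ∘ e.symm
          = (fun p : ℝ × ℝ => p.1 + p.2) ∘
            (Prod.map (fun t : ℝ => v 0 * t) (fun r : Fin d → ℝ => (fun j => v j.succ) ⬝ᵥ r)) := by
        funext q
        obtain ⟨t, r⟩ := q
        have : e.symm (t, r) = Fin.cons t r := by
          simp [he, MeasurableEquiv.piFinSuccAbove]
          rfl
        simp [this, dotProduct, Fin.sum_univ_succ]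
      have hm1 : Measurable fun t : ℝ => v 0 * t := measurable_id.const_mul _
      have hm2 : Measurable fun r : Fin d → ℝ => (fun j => v j.succ) ⬝ᵥ r := measurable_dot _
      rw [hpi, Measure.map_map (measurable_dot v) e.symm.measurable, hcomp,
        ← Measure.map_map measurable_add (hm1.prodMap hm2),
        ← Measure.map_prod_map _ _ hm1 hm2]
      have h1 : Measure.map (fun t : ℝ => v 0 * t) (gaussianReal 0 1)
          = gaussianReal 0 ⟨v 0 ^ 2, sq_nonneg _⟩ := by
        rw [gaussianReal_map_const_mul]
        norm_num
        rfl
      rw [h1, ih (fun j => v j.succ)]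
      refine (gauss_conv _ _).trans ?_
      congr 1
      ext
      push_cast
      exact (Fin.sum_univ_succ (fun i => v i ^ 2)).symm

lemma gauss_set_le (V : ℝ≥0) (hV : V ≠ 0) (Δ : ℝ) (hΔ : 0 ≤ Δ) (s : Set ℝ)
    (hs : MeasurableSet s) (hvol : volume s ≤ ENNReal.ofReal Δ) :
    (gaussianReal 0 V s).toReal ≤ Δ * (√(2 * π * V))⁻¹ := by
  rw [gaussianReal_apply_eq_integral 0 hV s]
  rw [ENNReal.toReal_ofReal]
  swap
  · exact setIntegral_nonneg hs fun t _ => gaussianPDFReal_nonneg 0 V t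
  have hfin : volume s < ⊤ := lt_of_le_of_lt hvol (by simp)
  calc ∫ t in s, gaussianPDFReal 0 V t
      ≤ ∫ _ in s, (√(2 * π * V))⁻¹ := by
        refine setIntegral_mono_on ((integrable_gaussianPDFReal 0 V).integrableOn) ?_ hs
          (fun t _ => gaussianPDFReal_le' V t)
        exact integrableOn_const hfin.ne
    _ = (volume s).toReal * (√(2 * π * V))⁻¹ := by rw [setIntegral_const]; rfl
    _ ≤ Δ * (√(2 * π * V))⁻¹ := by
        refine mul_le_mul_of_nonneg_right ?_ (by positivity)
        calc (volume s).toReal ≤ (ENNReal.ofReal Δ).toReal :=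
              ENNReal.toReal_mono (by simp) hvol
          _ = Δ := ENNReal.toReal_ofReal hΔ

lemma gauss_diff_Iic (V : ℝ≥0) (hV : V ≠ 0) (a₁ a₂ Δ : ℝ) (h : |a₁ - a₂| ≤ Δ) :
    (gaussianReal 0 V (Set.Iic a₂)).toReal - (gaussianReal 0 V (Set.Iic a₁)).toReal
      ≤ Δ * (√(2 * π * V))⁻¹ := by
  have hΔ : 0 ≤ Δ := le_trans (abs_nonneg _) h
  have hsub : Set.Iic a₂ ⊆ Set.Iic a₁ ∪ Set.Ioc a₁ a₂ := by
    intro t ht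
    rcases le_or_gt t a₁ with h' | h'
    · exact Or.inl h'
    · exact Or.inr ⟨h', ht⟩
  have hle : gaussianReal 0 V (Set.Iic a₂) ≤ gaussianReal 0 V (Set.Iic a₁)
      + gaussianReal 0 V (Set.Ioc a₁ a₂) :=
    le_trans (measure_mono hsub) (measure_union_le _ _)
  have h1 := ENNReal.toReal_mono (a := gaussianReal 0 V (Set.Iic a₂)) (by
    exact ENNReal.add_ne_top.2 ⟨measure_ne_top _ _, measure_ne_top _ _⟩) hle
  rw [ENNReal.toReal_add (measure_ne_top _ _) (measure_ne_top _ _)] at h1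
  have h2 : (gaussianReal 0 V (Set.Ioc a₁ a₂)).toReal ≤ Δ * (√(2 * π * V))⁻¹ := by
    refine gauss_set_le V hV Δ hΔ _ measurableSet_Ioc ?_
    rw [Real.volume_Ioc]
    refine ENNReal.ofReal_le_ofReal ?_
    rw [abs_sub_comm] at h
    exact le_trans (le_abs_self _) h
  linarith

lemma gauss_diff_Ici (V : ℝ≥0) (hV : V ≠ 0) (a₁ a₂ Δ : ℝ) (h : |a₁ - a₂| ≤ Δ) :
    (gaussianReal 0 V (Set.Ici a₂)).toReal - (gaussianReal 0 V (Set.Ici a₁)).toReal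
      ≤ Δ * (√(2 * π * V))⁻¹ := by
  have hΔ : 0 ≤ Δ := le_trans (abs_nonneg _) h
  have hsub : Set.Ici a₂ ⊆ Set.Ici a₁ ∪ Set.Ico a₂ a₁ := by
    intro t ht
    rcases le_or_gt a₁ t with h' | h'
    · exact Or.inl h'
    · exact Or.inr ⟨ht, h'⟩
  have hle : gaussianReal 0 V (Set.Ici a₂) ≤ gaussianReal 0 V (Set.Ici a₁)
      + gaussianReal 0 V (Set.Ico a₂ a₁) :=
    le_trans (measure_mono hsub) (measure_union_le _ _)
  have h1 := ENNReal.toReal_mono (a := gaussianReal 0 V (Set.Ici a₂)) (by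
    exact ENNReal.add_ne_top.2 ⟨measure_ne_top _ _, measure_ne_top _ _⟩) hle
  rw [ENNReal.toReal_add (measure_ne_top _ _) (measure_ne_top _ _)] at h1
  have h2 : (gaussianReal 0 V (Set.Ico a₂ a₁)).toReal ≤ Δ * (√(2 * π * V))⁻¹ := by
    refine gauss_set_le V hV Δ hΔ _ measurableSet_Ico ?_
    rw [Real.volume_Ico]
    exact ENNReal.ofReal_le_ofReal (le_trans (le_abs_self _) h)
  linarith

/-- The explicit square root matrix used in `multivariateGaussian`. -/
noncomputable def sqM {d : ℕ} {S : Matrix (Fin d) (Fin d) ℝ} (hS : S.PosSemidef) :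
    Matrix (Fin d) (Fin d) ℝ :=
  (hS.1.eigenvectorUnitary : Matrix (Fin d) (Fin d) ℝ) *
    diagonal ((RCLike.ofReal : ℝ → ℝ) ∘ Real.sqrt ∘ hS.1.eigenvalues) *
    (star hS.1.eigenvectorUnitary : Matrix (Fin d) (Fin d) ℝ)

lemma multivariateGaussian_eq {d : ℕ} {S : Matrix (Fin d) (Fin d) ℝ} (hS : S.PosSemidef) :
    multivariateGaussian hS = (stdGaussianPi d).map (fun u => sqM hS *ᵥ u) := rfl

lemma sqM_transpose {d : ℕ} {S : Matrix (Fin d) (Fin d) ℝ} (hS : S.PosSemidef) :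
    (sqM hS)ᵀ = sqM hS := by
  rw [← conjTranspose_eq_transpose_of_trivial]
  simp [sqM, Matrix.conjTranspose_mul, Matrix.mul_assoc, Matrix.star_eq_conjTranspose]

lemma sqM_mul_self {d : ℕ} {S : Matrix (Fin d) (Fin d) ℝ} (hS : S.PosSemidef) :
    sqM hS * sqM hS = S := by
  have hU : (star hS.1.eigenvectorUnitary : Matrix (Fin d) (Fin d) ℝ) *
      (hS.1.eigenvectorUnitary : Matrix (Fin d) (Fin d) ℝ) = 1 := Unitary.coe_star_mul_self _
  have hD : diagonal ((RCLike.ofReal : ℝ → ℝ) ∘ Real.sqrt ∘ hS.1.eigenvalues) *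
      diagonal ((RCLike.ofReal : ℝ → ℝ) ∘ Real.sqrt ∘ hS.1.eigenvalues)
      = diagonal ((RCLike.ofReal : ℝ → ℝ) ∘ hS.1.eigenvalues) := by
    rw [diagonal_mul_diagonal]
    congr 1
    funext i
    simp [Real.mul_self_sqrt (hS.eigenvalues_nonneg i)]
  conv_rhs => rw [hS.1.spectral_theorem]
  simp only [sqM, Unitary.conjStarAlgAut_apply]
  calc _ = (hS.1.eigenvectorUnitary : Matrix (Fin d) (Fin d) ℝ) *
        (diagonal ((RCLike.ofReal : ℝ → ℝ) ∘ Real.sqrt ∘ hS.1.eigenvalues) *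
        ((star hS.1.eigenvectorUnitary : Matrix (Fin d) (Fin d) ℝ) *
        (hS.1.eigenvectorUnitary : Matrix (Fin d) (Fin d) ℝ)) *
        diagonal ((RCLike.ofReal : ℝ → ℝ) ∘ Real.sqrt ∘ hS.1.eigenvalues)) *
        (star hS.1.eigenvectorUnitary : Matrix (Fin d) (Fin d) ℝ) := by
        simp only [Matrix.mul_assoc]
    _ = _ := by rw [hU, Matrix.mul_one, hD]

end StatementZeroAux

open StatementZeroAux

theorem statement0 {n d : ℕ} (p : ℝ≥0∞) (hp : 1 ≤ p)
    (f : PiLp p (fun _ : Fin n => ℝ) → (Fin d → ℝ)) (w : Fin d → ℝ) (b : ℝ)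
    (S : Matrix (Fin d) (Fin d) ℝ) (hS : S.PosSemidef)
    (hw : 0 < w ⬝ᵥ (S *ᵥ w))
    (x : PiLp p (fun _ : Fin n => ℝ)) (y : ℝ) (hy : y = -1 ∨ y = 1)
    (ε : ℝ) (hε : 0 ≤ ε) (Δ : ℝ) (hΔ : 0 ≤ Δ)
    (hrobust : ∀ δ : PiLp p (fun _ : Fin n => ℝ), ‖δ‖ ≤ ε →
      |(w ⬝ᵥ f x + b) - (w ⬝ᵥ f (x + δ) + b)| ≤ Δ) :
    ∀ δ : PiLp p (fun _ : Fin n => ℝ), ‖δ‖ ≤ ε →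
      (multivariateGaussian hS {z | y * (w ⬝ᵥ (f (x + δ) + z) + b) ≤ 0}).toReal -
        (multivariateGaussian hS {z | y * (w ⬝ᵥ (f x + z) + b) ≤ 0}).toReal ≤
      Δ / Real.sqrt (2 * Real.pi * (w ⬝ᵥ (S *ᵥ w))) := by
  intro δ hδ
  set v : Fin d → ℝ := sqM hS *ᵥ w with hv
  have hsym : (sqM hS)ᵀ = sqM hS := by
    exact sqM_transpose hS
  have hvv : v ⬝ᵥ v = w ⬝ᵥ (S *ᵥ w) := by
    rw [hv, Matrix.dotProduct_mulVec, ← Matrix.vecMul_transpose, hsym, Matrix.vecMul_vecMul,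
      sqM_mul_self hS, ← Matrix.dotProduct_mulVec]
  set V : ℝ≥0 := ⟨w ⬝ᵥ (S *ᵥ w), le_of_lt hw⟩ with hV
  have hVne : V ≠ 0 := by
    intro h
    rw [hV] at h
    exact absurd (congrArg NNReal.toReal h) (ne_of_gt hw)
  have hmulvec : Measurable fun u : Fin d → ℝ => sqM hS *ᵥ u :=
    measurable_pi_lambda _ fun i => measurable_dot _
  have h_map : Measure.map (fun z : Fin d → ℝ => w ⬝ᵥ z) (multivariateGaussian hS)
      = gaussianReal 0 V := by
    rw [multivariateGaussian_eq, Measure.map_map (measurable_dot w) hmulvec]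
    have hcomp : (fun z : Fin d → ℝ => w ⬝ᵥ z) ∘ (fun u => sqM hS *ᵥ u)
        = fun u : Fin d → ℝ => v ⬝ᵥ u := by
      funext u
      show w ⬝ᵥ (sqM hS *ᵥ u) = v ⬝ᵥ u
      rw [hv, Matrix.dotProduct_mulVec]
      congr 1
      rw [← Matrix.mulVec_transpose, hsym]
    rw [hcomp, dot_std_gaussian]
    congr 1
    ext
    show ∑ i, v i ^ 2 = w ⬝ᵥ (S *ᵥ w)
    rw [← hvv]
    simp [dotProduct, sq]
  have hΔ' : |(w ⬝ᵥ f x + b) - (w ⬝ᵥ f (x + δ) + b)| ≤ Δ := hrobust δ hδ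
  have hmeas_pre : ∀ s : Set ℝ, MeasurableSet s →
      (multivariateGaussian hS) ((fun z : Fin d → ℝ => w ⬝ᵥ z) ⁻¹' s) = gaussianReal 0 V s := by
    intro s hs
    rw [← Measure.map_apply (measurable_dot w) hs, h_map]
  have hrhs : Δ * (Real.sqrt (2 * Real.pi * (V:ℝ)))⁻¹
      = Δ / Real.sqrt (2 * Real.pi * (w ⬝ᵥ (S *ᵥ w))) := by
    rw [div_eq_mul_inv]
    rfl
  rcases hy with hy | hy
  · subst hy
    have hset : ∀ g : Fin d → ℝ, {z : Fin d → ℝ | (-1:ℝ) * (w ⬝ᵥ (g + z) + b) ≤ 0}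
        = (fun z : Fin d → ℝ => w ⬝ᵥ z) ⁻¹' Set.Ici (-(w ⬝ᵥ g + b)) := by
      intro g
      ext z
      simp only [Set.mem_setOf_eq, Set.mem_preimage, Set.mem_Ici, dotProduct_add]
      constructor <;> intro h <;> nlinarith
    rw [hset, hset, hmeas_pre _ measurableSet_Ici, hmeas_pre _ measurableSet_Ici, ← hrhs]
    refine gauss_diff_Ici V hVne _ _ Δ ?_
    rw [show -(w ⬝ᵥ f x + b) - -(w ⬝ᵥ f (x + δ) + b)
        = (w ⬝ᵥ f (x + δ) + b) - (w ⬝ᵥ f x + b) by ring, abs_sub_comm]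
    exact hΔ'
  · subst hy
    have hset : ∀ g : Fin d → ℝ, {z : Fin d → ℝ | (1:ℝ) * (w ⬝ᵥ (g + z) + b) ≤ 0}
        = (fun z : Fin d → ℝ => w ⬝ᵥ z) ⁻¹' Set.Iic (-(w ⬝ᵥ g + b)) := by
      intro g
      ext z
      simp only [Set.mem_setOf_eq, Set.mem_preimage, Set.mem_Iic, dotProduct_add]
      constructor <;> intro h <;> nlinarith
    rw [hset, hset, hmeas_pre _ measurableSet_Iic, hmeas_pre _ measurableSet_Iic, ← hrhs]
    refine gauss_diff_Iic V hVne _ _ Δ ?_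
    rw [show -(w ⬝ᵥ f x + b) - -(w ⬝ᵥ f (x + δ) + b)
        = (w ⬝ᵥ f (x + δ) + b) - (w ⬝ᵥ f x + b) by ring, abs_sub_comm]
    exact hΔ'
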